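/- Let R be a ring. The following are equivalent: (1) R is a semisimple artinian ring; (2) every right R-module has a D3-cover; (3) every 2-generated right R-module has a D3-cover; (4) every right R-module has a D3-envelope; (5) every 2-generated right R-module has a D3-envelope. -/

import Mathlib

universe u v w

section Defs

variable {S : Type u} [Ring S]

/-- A submodule `A` is a direct summand of `M`. -/
def IsDirectSummand {M : Type v} [AddCommGroup M] [Module S M] (A : Submodule S M) : Prop :=
  ∃ B : Submodule S M, A ⊓ B = ⊥ ∧ A ⊔ B = ⊤

/-- `A` is an essential submodule of `B`. -/
def IsEssentialIn {M : Type v} [AddCommGroup M] [Module S M] (A B : Submodule S M) : Prop :=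
  A ≤ B ∧ ∀ K : Submodule S M, K ≤ B → K ≠ ⊥ → A ⊓ K ≠ ⊥

/-- `A` is essential in some direct summand of `M`. -/
def EssentialInSummand {M : Type v} [AddCommGroup M] [Module S M] (A : Submodule S M) : Prop :=
  ∃ D : Submodule S M, IsDirectSummand D ∧ IsEssentialIn A D

/-- `A` is a small (superfluous) submodule of `M`. -/
def IsSmallSubmodule {M : Type v} [AddCommGroup M] [Module S M] (A : Submodule S M) : Prop :=
  ∀ K : Submodule S M, A ⊔ K = ⊤ → K = ⊤

/-- `A` lies above the direct summand `D` of `M`, i.e. `D ≤ A` and `A/D` is small in `M/D`. -/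
def LiesAbove {M : Type v} [AddCommGroup M] [Module S M] (A D : Submodule S M) : Prop :=
  IsDirectSummand D ∧ D ≤ A ∧ IsSmallSubmodule (Submodule.map D.mkQ A)

/-- `A` lies above some direct summand of `M`. -/
def LiesAboveSummand {M : Type v} [AddCommGroup M] [Module S M] (A : Submodule S M) : Prop :=
  ∃ D : Submodule S M, LiesAbove A D

end Defs

section ModDefs

variable (S : Type u) [Ring S]

/-- SSP: the sum of any two direct summands is a direct summand. -/
def HasSSP (M : Type v) [AddCommGroup M] [Module S M] : Prop :=
  ∀ A B : Submodule S M, IsDirectSummand A → IsDirectSummand B → IsDirectSummand (A ⊔ B)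

/-- SIP: the intersection of any two direct summands is a direct summand. -/
def HasSIP (M : Type v) [AddCommGroup M] [Module S M] : Prop :=
  ∀ A B : Submodule S M, IsDirectSummand A → IsDirectSummand B → IsDirectSummand (A ⊓ B)

/-- SIP-CS: the intersection of any finite family of direct summands is essential in a
direct summand. -/
def IsSIPCS (M : Type v) [AddCommGroup M] [Module S M] : Prop :=
  ∀ (ι : Type) [Fintype ι] (A : ι → Submodule S M),
    (∀ i, IsDirectSummand (A i)) → EssentialInSummand (⨅ i, A i)

/-- SSP-lifting: if each member of a finite family of submodules lies above a direct summand,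
then their sum lies above a direct summand. -/
def IsSSPLifting (M : Type v) [AddCommGroup M] [Module S M] : Prop :=
  ∀ (ι : Type) [Fintype ι] (A : ι → Submodule S M),
    (∀ i, LiesAboveSummand (A i)) → LiesAboveSummand (⨆ i, A i)

/-- C2 condition: every submodule isomorphic to a direct summand is a direct summand. -/
def HasC2 (M : Type v) [AddCommGroup M] [Module S M] : Prop :=
  ∀ A B : Submodule S M, IsDirectSummand B → Nonempty (A ≃ₗ[S] B) → IsDirectSummand A

/-- C3 condition: the sum of two direct summands with zero intersection is a direct summand. -/
def HasC3 (M : Type v) [AddCommGroup M] [Module S M] : Prop :=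
  ∀ A B : Submodule S M, IsDirectSummand A → IsDirectSummand B → A ⊓ B = ⊥ →
    IsDirectSummand (A ⊔ B)

/-- D2 condition: if `M/A` is isomorphic to a direct summand of `M` then `A` is a direct
summand. -/
def HasD2 (M : Type v) [AddCommGroup M] [Module S M] : Prop :=
  ∀ A : Submodule S M, (∃ B : Submodule S M, IsDirectSummand B ∧
    Nonempty ((M ⧸ A) ≃ₗ[S] B)) → IsDirectSummand A

/-- D3 condition: if two direct summands sum to `M`, their intersection is a direct summand. -/
def IsD3Module (M : Type v) [AddCommGroup M] [Module S M] : Prop :=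
  ∀ A B : Submodule S M, IsDirectSummand A → IsDirectSummand B → A ⊔ B = ⊤ →
    IsDirectSummand (A ⊓ B)

/-- `M` is relatively CS-Rickart to `N`. -/
def RelCSRickart (M : Type v) (N : Type w) [AddCommGroup M] [Module S M]
    [AddCommGroup N] [Module S N] : Prop :=
  ∀ φ : M →ₗ[S] N, EssentialInSummand (LinearMap.ker φ)

/-- `M` is relatively d-CS-Rickart to `N`. -/
def RelDCSRickart (M : Type v) (N : Type w) [AddCommGroup M] [Module S M]
    [AddCommGroup N] [Module S N] : Prop :=
  ∀ φ : N →ₗ[S] M, LiesAboveSummand (LinearMap.range φ)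

/-- CS-Rickart module. -/
def IsCSRickart (M : Type v) [AddCommGroup M] [Module S M] : Prop :=
  RelCSRickart S M M

/-- d-CS-Rickart module. -/
def IsDCSRickart (M : Type v) [AddCommGroup M] [Module S M] : Prop :=
  RelDCSRickart S M M

/-- `M` has an `Ω`-cover, where `Ω` is the class of modules satisfying `P`. -/
def HasCover (P : ModuleCat.{v} S → Prop) (M : Type v) [AddCommGroup M] [Module S M] : Prop :=
  ∃ (E : ModuleCat.{v} S) (g : E →ₗ[S] M), P E ∧
    (∀ (E' : ModuleCat.{v} S), P E' → ∀ g' : E' →ₗ[S] M,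
      ∃ h : E' →ₗ[S] E, g ∘ₗ h = g') ∧
    (∀ h : E →ₗ[S] E, g ∘ₗ h = g → Function.Bijective h)

/-- `M` has an `Ω`-envelope, where `Ω` is the class of modules satisfying `P`. -/
def HasEnvelope (P : ModuleCat.{v} S → Prop) (M : Type v) [AddCommGroup M] [Module S M] : Prop :=
  ∃ (E : ModuleCat.{v} S) (g : M →ₗ[S] E), P E ∧
    (∀ (E' : ModuleCat.{v} S), P E' → ∀ g' : M →ₗ[S] E',
      ∃ h : E →ₗ[S] E', h ∘ₗ g = g') ∧
    (∀ h : E →ₗ[S] E, h ∘ₗ g = g → Function.Bijective h)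

/-- `M` is 2-generated. -/
def TwoGenerated (M : Type v) [AddCommGroup M] [Module S M] : Prop :=
  ∃ a b : M, Submodule.span S ({a, b} : Set M) = ⊤

/-- `M` is finitely cogenerated. -/
def FinitelyCogenerated (M : Type v) [AddCommGroup M] [Module S M] : Prop :=
  ∀ 𝒜 : Set (Submodule S M), sInf 𝒜 = ⊥ →
    ∃ ℬ ⊆ 𝒜, ℬ.Finite ∧ sInf ℬ = ⊥

/-- The socle of `M`: the sum of all simple submodules. -/
def SocleOf (M : Type v) [AddCommGroup M] [Module S M] : Submodule S M :=
  sSup {A : Submodule S M | IsSimpleModule S ↥A}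

/-- An indecomposable module: nonzero, and its only direct summands are `0` and itself. -/
def IsIndecomposable (M : Type v) [AddCommGroup M] [Module S M] : Prop :=
  (⊤ : Submodule S M) ≠ ⊥ ∧
    ∀ A : Submodule S M, IsDirectSummand A → A = ⊥ ∨ A = ⊤

end ModDefs

section RingDefs

variable (R : Type u) [Ring R]

/-- The right annihilator of an element of a right `R`-module, as a right ideal of `R`. -/
def rightAnnihilator {M : Type v} [AddCommGroup M] [Module Rᵐᵒᵖ M] (m : M) :
    Submodule Rᵐᵒᵖ R where
  carrier := {r : R | MulOpposite.op r • m = 0}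
  add_mem' := by
    intro a b ha hb
    simp only [Set.mem_setOf_eq] at *
    rw [MulOpposite.op_add, add_smul, ha, hb, add_zero]
  zero_mem' := by simp
  smul_mem' := by
    intro c x hx
    simp only [Set.mem_setOf_eq] at *
    have : MulOpposite.op (c • x) = c * MulOpposite.op x := by
      rw [MulOpposite.smul_eq_mul_unop]
      simp [MulOpposite.op_mul]
    rw [this, mul_smul, hx, smul_zero]

/-- `M` is a nonsingular right `R`-module. -/
def IsNonsingular (M : Type v) [AddCommGroup M] [Module Rᵐᵒᵖ M] : Prop :=
  ∀ m : M, IsEssentialIn (rightAnnihilator R m) (⊤ : Submodule Rᵐᵒᵖ R) → m = 0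

/-- `R` is a right V-ring: every simple right `R`-module is injective. -/
def IsRightVRing : Prop :=
  ∀ (N : Type u) [AddCommGroup N] [Module Rᵐᵒᵖ N],
    IsSimpleModule Rᵐᵒᵖ N → Module.Injective Rᵐᵒᵖ N

/-- `R` is semiregular: `R/J(R)` is von Neumann regular and idempotents lift modulo `J(R)`. -/
def IsSemiregularRing : Prop :=
  (∀ a : R, ∃ b : R, a - a * b * a ∈ Ideal.jacobson (⊥ : Ideal R) ∧ b = b * a * b) ∧
  (∀ a : R, a * a - a ∈ Ideal.jacobson (⊥ : Ideal R) →
    ∃ e : R, e * e = e ∧ e - a ∈ Ideal.jacobson (⊥ : Ideal R))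

end RingDefs

section D3Machinery

open MulOpposite

namespace D3Aux

/-- The opposite of a ring, as a module over the opposite ring, is linearly equivalent to
the ring itself (with its right-module structure). -/
def opRight (T : Type u) [Ring T] : T ≃ₗ[Tᵐᵒᵖ] Tᵐᵒᵖ where
  toFun := op
  invFun := unop
  left_inv := fun _ => rfl
  right_inv := fun _ => rfl
  map_add' := fun _ _ => rfl
  map_smul' := fun _ _ => rfl

variable {S : Type u} [Ring S]

lemma isDirectSummand_of_isCompl {M : Type v} [AddCommGroup M] [Module S M]
    {A B : Submodule S M} (h : IsCompl A B) : IsDirectSummand A :=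
  ⟨B, disjoint_iff.mp h.disjoint, codisjoint_iff.mp h.codisjoint⟩

lemma isCompl_of_summand {M : Type v} [AddCommGroup M] [Module S M]
    {A B : Submodule S M} (h1 : A ⊓ B = ⊥) (h2 : A ⊔ B = ⊤) : IsCompl A B :=
  ⟨disjoint_iff.mpr h1, codisjoint_iff.mpr h2⟩

lemma isD3Module_of_isSemisimpleModule (M : Type v) [AddCommGroup M] [Module S M]
    [IsSemisimpleModule S M] : IsD3Module S M := by
  intro A B _ _ _
  obtain ⟨C, hC⟩ := exists_isCompl (A ⊓ B)
  exact isDirectSummand_of_isCompl hC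

/-- D3 descends along a split monomorphism. -/
lemma isD3Module_of_split {M : Type v} {E : Type w} [AddCommGroup M] [Module S M]
    [AddCommGroup E] [Module S E] (φ : M →ₗ[S] E) (g : E →ₗ[S] M)
    (hret : ∀ x, g (φ x) = x) (hE : IsD3Module S E) : IsD3Module S M := by
  have hφinj : Function.Injective φ := by
    intro x y hxy
    have := congrArg g hxy
    rwa [hret, hret] at this
  set K := LinearMap.ker g with hK
  have hmemK : ∀ x : E, x ∈ K ↔ g x = 0 := fun x => LinearMap.mem_ker
  have hdisj : ∀ x : E, x ∈ LinearMap.range φ → x ∈ K → x = 0 := by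
    rintro x ⟨y, rfl⟩ hk
    rw [hmemK, hret] at hk
    rw [hk, map_zero]
  have hdecomp : ∀ x : E, x - φ (g x) ∈ K := by
    intro x
    rw [hmemK, map_sub, hret, sub_self]
  -- transport of summands
  have hsummand : ∀ (C C₂ : Submodule S M), C ⊓ C₂ = ⊥ → C ⊔ C₂ = ⊤ →
      (Submodule.map φ C ⊔ K) ⊓ Submodule.map φ C₂ = ⊥ ∧
      (Submodule.map φ C ⊔ K) ⊔ Submodule.map φ C₂ = ⊤ := by
    intro C C₂ hb ht
    constructor
    · rw [eq_bot_iff]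
      intro x hx
      obtain ⟨hx1, hx2⟩ := Submodule.mem_inf.mp hx
      obtain ⟨c₂, hc₂, rfl⟩ := hx2
      obtain ⟨y, hy, k, hk, hsum⟩ := Submodule.mem_sup.mp hx1
      obtain ⟨c, hc, rfl⟩ := hy
      have hkr : k = φ (c₂ - c) := by
        rw [map_sub, ← hsum]; abel
      have hk0 : k = 0 := hdisj k ⟨c₂ - c, hkr.symm⟩ hk
      have hcc : φ c = φ c₂ := by rw [← hsum, hk0, add_zero]
      have hcc' : c = c₂ := hφinj hcc
      have : c₂ ∈ C ⊓ C₂ := Submodule.mem_inf.mpr ⟨hcc' ▸ hc, hc₂⟩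
      rw [hb] at this
      rw [(Submodule.mem_bot S).mp this, map_zero]
      exact Submodule.zero_mem _
    · rw [eq_top_iff]
      rintro x -
      have hgx : g x ∈ C ⊔ C₂ := by rw [ht]; trivial
      obtain ⟨c, hc, c₂, hc₂, hsum⟩ := Submodule.mem_sup.mp hgx
      have hx : x = (φ c + (x - φ (g x))) + φ c₂ := by
        rw [← hsum, map_add]; abel
      rw [hx]
      exact Submodule.add_mem_sup
        (Submodule.add_mem _ (Submodule.mem_sup_left (Submodule.mem_map_of_mem hc))
          (Submodule.mem_sup_right (hdecomp x)))
        (Submodule.mem_map_of_mem hc₂)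
  -- the inf formula
  have hinf : ∀ (A B : Submodule S M),
      (Submodule.map φ A ⊔ K) ⊓ (Submodule.map φ B ⊔ K)
        = Submodule.map φ (A ⊓ B) ⊔ K := by
    intro A B
    apply le_antisymm
    · intro x hx
      obtain ⟨hx1, hx2⟩ := Submodule.mem_inf.mp hx
      obtain ⟨y, hy, k, hk, hsum⟩ := Submodule.mem_sup.mp hx1
      obtain ⟨a, ha, rfl⟩ := hy
      obtain ⟨y', hy', k', hk', hsum'⟩ := Submodule.mem_sup.mp hx2
      obtain ⟨b, hb, rfl⟩ := hy'
      have h := hsum.trans hsum'.symm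
      have hdiff : φ (a - b) = k' - k := by
        rw [map_sub, sub_eq_sub_iff_add_eq_add]
        exact h.trans (add_comm _ _)
      have hz : φ (a - b) = 0 :=
        hdisj _ ⟨a - b, rfl⟩ (hdiff ▸ Submodule.sub_mem K hk' hk)
      have hab : a = b := by
        have := sub_eq_zero.mp ((map_sub φ a b).symm.trans hz)
        exact hφinj this
      rw [← hsum]
      exact Submodule.add_mem_sup
        (Submodule.mem_map_of_mem (Submodule.mem_inf.mpr ⟨ha, hab ▸ hb⟩)) hk
    · apply sup_le
      · apply le_inf
        · exact le_trans (Submodule.map_mono inf_le_left) le_sup_left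
        · exact le_trans (Submodule.map_mono inf_le_right) le_sup_left
      · exact le_inf le_sup_right le_sup_right
  -- range ⊔ K = ⊤
  have hrange : LinearMap.range φ ⊔ K = ⊤ := by
    rw [eq_top_iff]
    rintro x -
    have : x = φ (g x) + (x - φ (g x)) := by abel
    rw [this]
    exact Submodule.add_mem_sup ⟨g x, rfl⟩ (hdecomp x)
  -- main argument
  intro A B hA hB hAB
  obtain ⟨A₂, hA₂b, hA₂t⟩ := hA
  obtain ⟨B₂, hB₂b, hB₂t⟩ := hB
  obtain ⟨hAd, hAt⟩ := hsummand A A₂ hA₂b hA₂t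
  obtain ⟨hBd, hBt⟩ := hsummand B B₂ hB₂b hB₂t
  have hsupAB : (Submodule.map φ A ⊔ K) ⊔ (Submodule.map φ B ⊔ K) = ⊤ := by
    rw [sup_sup_sup_comm, sup_idem, ← Submodule.map_sup, hAB, Submodule.map_top, hrange]
  obtain ⟨W, hWb, hWt⟩ := hE _ _ ⟨_, hAd, hAt⟩ ⟨_, hBd, hBt⟩ hsupAB
  rw [hinf] at hWb hWt
  refine ⟨Submodule.map g W, ?_, ?_⟩
  · rw [eq_bot_iff]
    intro x hx
    obtain ⟨hx1, hx2⟩ := Submodule.mem_inf.mp hx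
    obtain ⟨w, hw, rfl⟩ := hx2
    have hwmem : w ∈ Submodule.map φ (A ⊓ B) ⊔ K := by
      have : w = φ (g w) + (w - φ (g w)) := by abel
      rw [this]
      exact Submodule.add_mem _ (Submodule.mem_sup_left (Submodule.mem_map_of_mem hx1))
        (Submodule.mem_sup_right (hdecomp w))
    have : w ∈ (Submodule.map φ (A ⊓ B) ⊔ K) ⊓ W := Submodule.mem_inf.mpr ⟨hwmem, hw⟩
    rw [hWb] at this
    rw [(Submodule.mem_bot S).mp this, map_zero]
    trivial
  · rw [eq_top_iff]
    rintro x -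
    have hφx : φ x ∈ (Submodule.map φ (A ⊓ B) ⊔ K) ⊔ W := by rw [hWt]; trivial
    obtain ⟨y, hy, w, hw, hsum⟩ := Submodule.mem_sup.mp hφx
    obtain ⟨y', hy', k, hk, hsum'⟩ := Submodule.mem_sup.mp hy
    obtain ⟨c, hc, rfl⟩ := hy'
    have : x = c + g w := by
      have h1 : g (φ x) = g (φ c) + g k + g w := by
        rw [← hsum, ← hsum', map_add, map_add]
      rw [hret, hret] at h1
      rw [(hmemK k).mp hk, add_zero] at h1
      exact h1
    rw [this]
    exact Submodule.add_mem_sup hc (Submodule.mem_map_of_mem hw)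

end D3Aux
end D3Machinery
section D3Self
namespace D3Aux

/-- The regular right module is always D3 (projective modules satisfy D2, and D2 implies D3). -/
lemma isD3Module_self (R : Type u) [Ring R] : IsD3Module Rᵐᵒᵖ R := by
  intro A B hA hB hAB
  obtain ⟨A', hA'b, hA't⟩ := hA
  obtain ⟨B', hB'b, hB't⟩ := hB
  have hcA : IsCompl A A' := isCompl_of_summand hA'b hA't
  have hcB : IsCompl B B' := isCompl_of_summand hB'b hB't
  set πA' := Submodule.projectionOnto A' A hcA.symm with hπA'
  set πB := Submodule.projectionOnto B B' hcB with hπB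
  set ρ : R →ₗ[Rᵐᵒᵖ] ↥A' := πA' ∘ₗ (B.subtype ∘ₗ πB) with hρ
  have hρapp : ∀ x : R, ρ x = πA' ((πB x : R)) := fun x => rfl
  haveI : Module.Projective Rᵐᵒᵖ R := Module.Projective.of_equiv (opRight R).symm
  haveI : Module.Projective Rᵐᵒᵖ ↥A' :=
    Module.Projective.of_split A'.subtype πA'
      (by ext x; simp [hπA'])
  -- ρ is surjective
  have hρsurj : Function.Surjective ρ := by
    intro a'
    have hmem : (a' : R) ∈ A ⊔ B := by rw [hAB]; trivial
    obtain ⟨a, ha, b, hb, hsum⟩ := Submodule.mem_sup.mp hmem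
    refine ⟨b, ?_⟩
    have h1 : πB b = ⟨b, hb⟩ := Submodule.linearProjOfIsCompl_apply_left hcB ⟨b, hb⟩
    have h2 : ρ b = πA' b := by rw [hρapp, h1]
    have h3 : πA' b = πA' (a + b) - πA' a := by rw [map_add]; abel
    rw [Submodule.projectionOnto_apply_of_mem_right hcA.symm ha, sub_zero, hsum,
      Submodule.projectionOnto_apply_left hcA.symm a'] at h3
    rw [h2, h3]
  -- the kernel of ρ
  have hker : LinearMap.ker ρ = (A ⊓ B) ⊔ B' := by
    ext x
    rw [LinearMap.mem_ker]
    constructor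
    · intro hx
      have hmem : x ∈ B ⊔ B' := by rw [hB't]; trivial
      obtain ⟨b, hb, b', hb', hsum⟩ := Submodule.mem_sup.mp hmem
      have h1 : πB x = ⟨b, hb⟩ := by
        rw [← hsum, map_add, Submodule.projectionOnto_apply_left hcB ⟨b, hb⟩,
          Submodule.projectionOnto_apply_of_mem_right hcB hb', add_zero]
      have h2 : ρ x = πA' b := by rw [hρapp, h1]
      rw [h2] at hx
      have hbA : b ∈ A := by
        have hmk : b ∈ LinearMap.ker πA' := LinearMap.mem_ker.mpr hx
        rwa [hπA', Submodule.ker_projectionOnto] at hmk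
      rw [← hsum]
      exact Submodule.add_mem_sup (Submodule.mem_inf.mpr ⟨hbA, hb⟩) hb'
    · intro hx
      obtain ⟨c, hc, b', hb', hsum⟩ := Submodule.mem_sup.mp hx
      obtain ⟨hcA', hcB'⟩ := Submodule.mem_inf.mp hc
      have h1 : πB x = ⟨c, hcB'⟩ := by
        rw [← hsum, map_add, Submodule.projectionOnto_apply_left hcB ⟨c, hcB'⟩,
          Submodule.projectionOnto_apply_of_mem_right hcB hb', add_zero]
      have h2 : ρ x = πA' c := by rw [hρapp, h1]
      rw [h2]
      exact Submodule.projectionOnto_apply_of_mem_right hcA.symm hcA'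
  -- splitting of ρ
  obtain ⟨σ, hσ⟩ := Module.projective_lifting_property ρ LinearMap.id hρsurj
  have hσ' : ∀ a', ρ (σ a') = a' := fun a' => by
    have := LinearMap.congr_fun hσ a'
    simpa using this
  set W := LinearMap.range σ with hW
  have hWk : LinearMap.ker ρ ⊓ W = ⊥ := by
    rw [eq_bot_iff]; intro x hx
    obtain ⟨h1, h2⟩ := Submodule.mem_inf.mp hx
    obtain ⟨a', rfl⟩ := h2
    rw [LinearMap.mem_ker] at h1
    have ha0 : a' = 0 := by rw [← hσ' a', h1]
    simp [ha0]
  have hWt : LinearMap.ker ρ ⊔ W = ⊤ := by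
    rw [eq_top_iff]; rintro x -
    have hd : x - σ (ρ x) ∈ LinearMap.ker ρ := by
      rw [LinearMap.mem_ker, map_sub, hσ', sub_self]
    have hxeq : x = (x - σ (ρ x)) + σ (ρ x) := by abel
    rw [hxeq]
    exact Submodule.add_mem_sup hd ⟨ρ x, rfl⟩
  -- the complement of A ⊓ B
  refine ⟨B' ⊔ W, ?_, ?_⟩
  · rw [eq_bot_iff]; intro x hx
    obtain ⟨h1, h2⟩ := Submodule.mem_inf.mp hx
    obtain ⟨b', hb', w, hw, hsum⟩ := Submodule.mem_sup.mp h2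
    have hxker : x ∈ LinearMap.ker ρ := by rw [hker]; exact Submodule.mem_sup_left h1
    have hb'ker : b' ∈ LinearMap.ker ρ := by rw [hker]; exact Submodule.mem_sup_right hb'
    have hwker : w ∈ LinearMap.ker ρ := by
      have hweq : w = x - b' := by rw [← hsum]; abel
      rw [hweq]; exact Submodule.sub_mem _ hxker hb'ker
    have hw0 : w = 0 := by
      have hm : w ∈ LinearMap.ker ρ ⊓ W := Submodule.mem_inf.mpr ⟨hwker, hw⟩
      rw [hWk] at hm; exact (Submodule.mem_bot _).mp hm
    have hxb' : x = b' := by rw [← hsum, hw0, add_zero]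
    have hm2 : x ∈ B ⊓ B' := Submodule.mem_inf.mpr ⟨(Submodule.mem_inf.mp h1).2, hxb' ▸ hb'⟩
    rw [hB'b] at hm2
    simpa using hm2
  · rw [← sup_assoc, ← hker, hWt]

end D3Aux
end D3Self
section D3Prod
namespace D3Aux

open MulOpposite

variable {S : Type u} [Ring S]

lemma isD3Module_of_isSimpleModule (M : Type v) [AddCommGroup M] [Module S M]
    [IsSimpleModule S M] : IsD3Module S M := by
  intro A B _ _ _
  rcases eq_bot_or_eq_top (A ⊓ B) with h | h
  · exact ⟨⊤, by rw [h]; simp, by rw [h]; simp⟩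
  · exact ⟨⊥, by rw [h]; simp, by rw [h]; simp⟩

/-- If `X × Y` has a D3-cover and `X`, `Y` are D3, then `X × Y` is D3. -/
lemma isD3Module_prod_of_hasCover {X Y : Type u} [AddCommGroup X] [Module S X]
    [AddCommGroup Y] [Module S Y] (hX : IsD3Module S X) (hY : IsD3Module S Y)
    (hc : HasCover S (fun E => IsD3Module S E) (X × Y)) : IsD3Module S (X × Y) := by
  obtain ⟨E, g, hE, hfac, -⟩ := hc
  obtain ⟨h₁, hh₁⟩ := hfac (ModuleCat.of S X) hX (LinearMap.inl S X Y)
  obtain ⟨h₂, hh₂⟩ := hfac (ModuleCat.of S Y) hY (LinearMap.inr S X Y)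
  refine isD3Module_of_split
    (h₁.comp (LinearMap.fst S X Y) + h₂.comp (LinearMap.snd S X Y)) g ?_ hE
  intro x
  have e₁ : g (h₁ x.1) = (x.1, 0) := LinearMap.congr_fun hh₁ x.1
  have e₂ : g (h₂ x.2) = (0, x.2) := LinearMap.congr_fun hh₂ x.2
  have hstep : (h₁.comp (LinearMap.fst S X Y) + h₂.comp (LinearMap.snd S X Y)) x
      = h₁ x.1 + h₂ x.2 := rfl
  rw [hstep, map_add, e₁, e₂]
  ext <;> simp

/-- If `X × Y` has a D3-envelope and `X`, `Y` are D3, then `X × Y` is D3. -/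
lemma isD3Module_prod_of_hasEnvelope {X Y : Type u} [AddCommGroup X] [Module S X]
    [AddCommGroup Y] [Module S Y] (hX : IsD3Module S X) (hY : IsD3Module S Y)
    (hc : HasEnvelope S (fun E => IsD3Module S E) (X × Y)) : IsD3Module S (X × Y) := by
  obtain ⟨E, u, hE, hfac, -⟩ := hc
  obtain ⟨h₁, hh₁⟩ := hfac (ModuleCat.of S X) hX (LinearMap.fst S X Y)
  obtain ⟨h₂, hh₂⟩ := hfac (ModuleCat.of S Y) hY (LinearMap.snd S X Y)
  refine isD3Module_of_split u
    ((LinearMap.inl S X Y).comp h₁ + (LinearMap.inr S X Y).comp h₂) ?_ hE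
  intro x
  have e₁ : h₁ (u x) = x.1 := LinearMap.congr_fun hh₁ x
  have e₂ : h₂ (u x) = x.2 := LinearMap.congr_fun hh₂ x
  have hstep : ((LinearMap.inl S X Y).comp h₁ + (LinearMap.inr S X Y).comp h₂) (u x)
      = (h₁ (u x), 0) + (0, h₂ (u x)) := rfl
  rw [hstep, e₁, e₂]
  ext <;> simp

/-- `R × R/m` is 2-generated. -/
lemma twoGenerated_prod_quotient (R : Type u) [Ring R] (m : Submodule Rᵐᵒᵖ R) :
    TwoGenerated Rᵐᵒᵖ (R × (R ⧸ m)) := by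
  refine ⟨(1, 0), (0, Submodule.Quotient.mk 1), ?_⟩
  rw [eq_top_iff]
  rintro ⟨r, q⟩ -
  obtain ⟨s, rfl⟩ := Submodule.mkQ_surjective m q
  have h1 : (op r) • ((1 : R), (0 : R ⧸ m)) = ((r : R), (0 : R ⧸ m)) := by
    ext
    · simp [MulOpposite.smul_eq_mul_unop]
    · simp
  have h2 : (op s) • ((0 : R), Submodule.Quotient.mk (p := m) 1)
      = ((0 : R), Submodule.Quotient.mk (p := m) s) := by
    ext
    · simp
    · show Submodule.Quotient.mk (p := m) ((op s) • (1 : R)) = _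
      rw [MulOpposite.smul_eq_mul_unop]
      simp
  have hmem : ((r : R), (Submodule.mkQ m) s) ∈
      Submodule.span Rᵐᵒᵖ {((1 : R), (0 : R ⧸ m)), ((0 : R), Submodule.Quotient.mk 1)} := by
    have : ((r : R), (Submodule.mkQ m) s)
        = (op r) • ((1 : R), (0 : R ⧸ m)) + (op s) • ((0 : R), Submodule.Quotient.mk 1) := by
      rw [h1, h2]
      ext <;> simp [Submodule.Quotient.mk]
    rw [this]
    exact Submodule.add_mem _
      (Submodule.smul_mem _ _ (Submodule.subset_span (by simp)))
      (Submodule.smul_mem _ _ (Submodule.subset_span (by simp)))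
  exact hmem

/-- The graph argument: if `R × R/m` is D3, then `m` is a direct summand of `R`. -/
lemma summand_of_isD3_prod (R : Type u) [Ring R] (m : Submodule Rᵐᵒᵖ R)
    (hD3 : IsD3Module Rᵐᵒᵖ (R × (R ⧸ m))) :
    ∃ U : Submodule Rᵐᵒᵖ R, m ⊓ U = ⊥ ∧ m ⊔ U = ⊤ := by
  set p := m.mkQ with hp
  set A := LinearMap.graph p with hA
  set B := Submodule.prod (⊤ : Submodule Rᵐᵒᵖ R) (⊥ : Submodule Rᵐᵒᵖ (R ⧸ m)) with hB
  set C₀ := Submodule.prod (⊥ : Submodule Rᵐᵒᵖ R) (⊤ : Submodule Rᵐᵒᵖ (R ⧸ m)) with hC₀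
  -- A is a summand
  have hAsummand : A ⊓ C₀ = ⊥ ∧ A ⊔ C₀ = ⊤ := by
    constructor
    · rw [eq_bot_iff]
      rintro ⟨r, q⟩ hx
      obtain ⟨h1, h2⟩ := Submodule.mem_inf.mp hx
      rw [LinearMap.mem_graph_iff] at h1
      obtain ⟨hr, -⟩ := Submodule.mem_prod.mp h2
      have hr0 : r = 0 := hr
      have h1' : q = p r := h1
      have : q = 0 := by rw [h1', hr0, map_zero]
      simp [hr0, this]
    · rw [eq_top_iff]
      rintro ⟨r, q⟩ -
      have : ((r : R), q) = ((r, p r) : R × (R ⧸ m)) + (0, q - p r) := by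
        ext <;> simp
      rw [this]
      exact Submodule.add_mem_sup (LinearMap.mem_graph_iff _ _ |>.mpr rfl)
        (Submodule.mem_prod.mpr ⟨by trivial, by trivial⟩)
  -- B is a summand
  have hBsummand : B ⊓ C₀ = ⊥ ∧ B ⊔ C₀ = ⊤ := by
    constructor
    · rw [eq_bot_iff]
      rintro ⟨r, q⟩ hx
      obtain ⟨h1, h2⟩ := Submodule.mem_inf.mp hx
      obtain ⟨-, hq⟩ := Submodule.mem_prod.mp h1
      obtain ⟨hr, -⟩ := Submodule.mem_prod.mp h2
      have : r = 0 := hr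
      have hq0 : q = 0 := hq
      simp [this, hq0]
    · rw [eq_top_iff]
      rintro ⟨r, q⟩ -
      have : ((r : R), q) = ((r, 0) : R × (R ⧸ m)) + (0, q) := by ext <;> simp
      rw [this]
      exact Submodule.add_mem_sup (Submodule.mem_prod.mpr ⟨by trivial, by trivial⟩)
        (Submodule.mem_prod.mpr ⟨by trivial, by trivial⟩)
  -- A ⊔ B = ⊤
  have hABtop : A ⊔ B = ⊤ := by
    rw [eq_top_iff]
    rintro ⟨r, q⟩ -
    obtain ⟨s, rfl⟩ := Submodule.mkQ_surjective m q
    have : ((r : R), m.mkQ s) = ((s, p s) : R × (R ⧸ m)) + (r - s, 0) := by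
      ext <;> simp [hp]
    rw [this]
    exact Submodule.add_mem_sup (LinearMap.mem_graph_iff _ _ |>.mpr rfl)
      (Submodule.mem_prod.mpr ⟨by trivial, by trivial⟩)
  -- A ⊓ B = m × ⊥
  have hABinf : A ⊓ B = Submodule.prod m (⊥ : Submodule Rᵐᵒᵖ (R ⧸ m)) := by
    ext ⟨r, q⟩
    rw [Submodule.mem_inf, LinearMap.mem_graph_iff, Submodule.mem_prod, Submodule.mem_prod]
    constructor
    · rintro ⟨h1, -, h2⟩
      have hq0 : q = 0 := h2
      refine ⟨?_, h2⟩
      have hpr : p r = 0 := by rw [← h1, hq0]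
      rwa [hp, show (Submodule.mkQ m) r = Submodule.Quotient.mk r from rfl,
        Submodule.Quotient.mk_eq_zero] at hpr
    · rintro ⟨h1, h2⟩
      have hq0 : q = 0 := h2
      refine ⟨?_, trivial, h2⟩
      rw [hq0]
      symm
      rwa [hp, show (Submodule.mkQ m) r = Submodule.Quotient.mk r from rfl,
        Submodule.Quotient.mk_eq_zero]
  -- apply D3
  obtain ⟨W, hWb, hWt⟩ := hD3 A B ⟨C₀, hAsummand.1, hAsummand.2⟩
    ⟨C₀, hBsummand.1, hBsummand.2⟩ hABtop
  rw [hABinf] at hWb hWt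
  -- extract the complement of m
  refine ⟨Submodule.map (LinearMap.fst Rᵐᵒᵖ R (R ⧸ m)) (B ⊓ W), ?_, ?_⟩
  · rw [eq_bot_iff]
    intro x hx
    obtain ⟨h1, h2⟩ := Submodule.mem_inf.mp hx
    obtain ⟨c, hc, rfl⟩ := h2
    obtain ⟨hcB, hcW⟩ := Submodule.mem_inf.mp hc
    obtain ⟨-, hc2⟩ := Submodule.mem_prod.mp hcB
    have hc20 : c.2 = 0 := hc2
    have hcmem : c ∈ Submodule.prod m (⊥ : Submodule Rᵐᵒᵖ (R ⧸ m)) :=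
      Submodule.mem_prod.mpr ⟨h1, hc2⟩
    have : c ∈ Submodule.prod m (⊥ : Submodule Rᵐᵒᵖ (R ⧸ m)) ⊓ W :=
      Submodule.mem_inf.mpr ⟨hcmem, hcW⟩
    rw [hWb] at this
    rw [(Submodule.mem_bot _).mp this]
    simp
  · rw [eq_top_iff]
    rintro r -
    have hmem : ((r : R), (0 : R ⧸ m)) ∈ Submodule.prod m (⊥ : Submodule Rᵐᵒᵖ (R ⧸ m)) ⊔ W := by
      rw [hWt]; trivial
    obtain ⟨y, hy, w, hw, hsum⟩ := Submodule.mem_sup.mp hmem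
    obtain ⟨hy1, hy2⟩ := Submodule.mem_prod.mp hy
    have hwB : w ∈ B := by
      have hw2 : w.2 = 0 := by
        have := congrArg Prod.snd hsum
        simp only [Prod.snd_add] at this
        have hy20 : y.2 = 0 := hy2
        rw [hy20, zero_add] at this
        exact this
      exact Submodule.mem_prod.mpr ⟨trivial, hw2⟩
    have hr : r = y.1 + w.1 := by
      have := congrArg Prod.fst hsum
      simpa using this.symm
    rw [hr]
    exact Submodule.add_mem_sup hy1
      (Submodule.mem_map_of_mem (Submodule.mem_inf.mpr ⟨hwB, hw⟩))

end D3Aux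
end D3Prod
section Socle
namespace D3Aux
open MulOpposite

/-- If every maximal submodule of the right regular module splits, `R` is right semisimple. -/
lemma isSemisimpleModule_right_of_coatom_compl (R : Type u) [Ring R] [Nontrivial R]
    (h : ∀ m : Submodule Rᵐᵒᵖ R, IsCoatom m → ∃ U : Submodule Rᵐᵒᵖ R, m ⊓ U = ⊥ ∧ m ⊔ U = ⊤) :
    IsSemisimpleModule Rᵐᵒᵖ R := by
  rw [← sSup_simples_eq_top_iff_isSemisimpleModule]
  by_contra hne
  set Soc := sSup {p : Submodule Rᵐᵒᵖ R | IsSimpleModule Rᵐᵒᵖ p} with hSoc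
  let oi : Submodule Rᵐᵒᵖ R ≃o Ideal Rᵐᵒᵖ := Submodule.orderIsoMapComap (opRight R)
  have hne' : oi Soc ≠ ⊤ := by
    intro hcon
    apply hne
    have hx := congrArg oi.symm hcon
    rwa [oi.symm_apply_apply, OrderIso.map_top] at hx
  obtain ⟨Mx, hMx, hle⟩ := Ideal.exists_le_maximal _ hne'
  set m := oi.symm Mx with hm
  have hcm : IsCoatom m := by
    rw [hm, ← OrderIso.isCoatom_iff oi, oi.apply_symm_apply]
    exact Ideal.isMaximal_def.mp hMx
  have hSocm : Soc ≤ m := by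
    have h2 := oi.symm.monotone hle
    rwa [oi.symm_apply_apply] at h2
  obtain ⟨U, hUb, hUt⟩ := h m hcm
  have hcompl : IsCompl m U := isCompl_of_summand hUb hUt
  haveI hqs : IsSimpleModule Rᵐᵒᵖ (R ⧸ m) := isSimpleModule_iff_isCoatom.mpr hcm
  have hUsimple : IsSimpleModule Rᵐᵒᵖ ↥U :=
    IsSimpleModule.congr (Submodule.quotientEquivOfIsCompl m U hcompl).symm
  have hUle : U ≤ Soc := le_sSup hUsimple
  have hUm : U ≤ m := le_trans hUle hSocm
  have hU0 : U = ⊥ := by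
    rw [eq_bot_iff, ← hUb]
    exact le_inf hUm le_rfl
  rw [hU0, sup_bot_eq] at hUt
  exact hcm.1 hUt

end D3Aux
end Socle

section Symmetry
namespace D3Aux
open MulOpposite

variable {T : Type u} [Ring T]

/-- The right ideal generated by an element. -/
abbrev rspan (T : Type u) [Ring T] (a : T) : Submodule Tᵐᵒᵖ T := Submodule.span Tᵐᵒᵖ {a}

lemma mem_rspan {a x : T} : x ∈ rspan T a ↔ ∃ r : T, a * r = x := by
  rw [Submodule.mem_span_singleton]
  constructor
  · rintro ⟨c, rfl⟩
    exact ⟨c.unop, rfl⟩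
  · rintro ⟨r, rfl⟩
    exact ⟨op r, rfl⟩

lemma rspan_le {a : T} {J : Submodule Tᵐᵒᵖ T} (ha : a ∈ J) : rspan T a ≤ J :=
  Submodule.span_le.mpr (Set.singleton_subset_iff.mpr ha)

lemma self_mem_rspan (a : T) : a ∈ rspan T a := Submodule.mem_span_singleton_self a

/-- Every element of a (left) semisimple ring is von Neumann regular. -/
lemma exists_regular [IsSemisimpleRing T] (a : T) : ∃ x : T, a * x * a = a := by
  obtain ⟨e, he, hspan⟩ := IsSemisimpleRing.ideal_eq_span_idempotent (Ideal.span {a})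
  have hea : e ∈ Ideal.span {a} := by
    rw [hspan]
    exact Ideal.subset_span rfl
  obtain ⟨x, hx⟩ : ∃ x : T, x * a = e := by
    obtain ⟨c, hc⟩ := Submodule.mem_span_singleton.mp hea
    exact ⟨c, by rw [← hc]; rfl⟩
  have haa : a ∈ Ideal.span {e} := by
    rw [← hspan]
    exact Ideal.subset_span rfl
  obtain ⟨y, hy⟩ : ∃ y : T, y * e = a := by
    obtain ⟨c, hc⟩ := Submodule.mem_span_singleton.mp haa
    exact ⟨c, by rw [← hc]; rfl⟩
  have hae : a * e = a := by
    rw [← hy, mul_assoc, he.eq]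
  refine ⟨x, ?_⟩
  calc a * x * a = a * (x * a) := by rw [mul_assoc]
    _ = a * e := by rw [hx]
    _ = a := hae

lemma exists_idem_rspan [IsSemisimpleRing T] (a : T) :
    ∃ f : T, f * f = f ∧ rspan T a = rspan T f ∧ ∃ z : T, a * z = f := by
  obtain ⟨x, hx⟩ := exists_regular a
  refine ⟨a * x, ?_, ?_, x, rfl⟩
  · rw [← mul_assoc, hx]
  · apply le_antisymm
    · apply rspan_le
      exact mem_rspan.mpr ⟨a, by rw [mul_assoc] at hx ⊢; rw [hx]⟩
    · apply rspan_le
      exact mem_rspan.mpr ⟨x, rfl⟩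

lemma rspan_sup_idem [IsSemisimpleRing T] {e : T} (he : e * e = e) (b : T) :
    ∃ h : T, h * h = h ∧ rspan T e ⊔ rspan T b = rspan T h := by
  set c := b - e * b with hc
  have hec : e * c = 0 := by rw [hc, mul_sub, ← mul_assoc, he, sub_self]
  obtain ⟨g, hg, hgspan, z, hz⟩ := exists_idem_rspan c
  have heg : e * g = 0 := by rw [← hz, ← mul_assoc, hec, zero_mul]
  refine ⟨e + g - g * e, ?_, ?_⟩
  · have k1 : e * (g * e) = 0 := by rw [← mul_assoc, heg, zero_mul]
    have k2 : g * (g * e) = g * e := by rw [← mul_assoc, hg]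
    have k3 : (g * e) * e = g * e := by rw [mul_assoc, he]
    have k4 : (g * e) * g = 0 := by rw [mul_assoc, heg, mul_zero]
    have k5 : (g * e) * (g * e) = 0 := by rw [← mul_assoc, k4, zero_mul]
    have expand : (e + g - g * e) * (e + g - g * e)
        = e * e + e * g - e * (g * e) + (g * e + g * g - g * (g * e))
          - ((g * e) * e + (g * e) * g - (g * e) * (g * e)) := by
      noncomm_ring
    rw [expand, he, heg, k1, k2, hg, k3, k4, k5]
    abel
  · have hbc : rspan T e ⊔ rspan T b = rspan T e ⊔ rspan T c := by
      apply le_antisymm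
      · apply sup_le le_sup_left
        apply rspan_le
        have : b = e * b + c := by rw [hc]; abel
        rw [this]
        exact Submodule.add_mem _ (Submodule.mem_sup_left (mem_rspan.mpr ⟨b, rfl⟩))
          (Submodule.mem_sup_right (self_mem_rspan c))
      · apply sup_le le_sup_left
        apply rspan_le
        rw [hc]
        exact Submodule.sub_mem _ (Submodule.mem_sup_right (self_mem_rspan b))
          (Submodule.mem_sup_left (mem_rspan.mpr ⟨b, rfl⟩))
    rw [hbc, hgspan]
    apply le_antisymm
    · apply sup_le
      · apply rspan_le
        refine mem_rspan.mpr ⟨e, ?_⟩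
        have h1 : (e + g - g * e) * e = e * e + g * e - g * (e * e) := by noncomm_ring
        rw [h1, he]
        abel
      · apply rspan_le
        refine mem_rspan.mpr ⟨g, ?_⟩
        have h1 : (e + g - g * e) * g = e * g + g * g - g * (e * g) := by noncomm_ring
        rw [h1, heg, hg, mul_zero]
        abel
    · apply rspan_le
      have : e + g - g * e = e + (g - g * e) := by abel
      rw [this]
      exact Submodule.add_mem _ (Submodule.mem_sup_left (self_mem_rspan e))
        (Submodule.mem_sup_right (Submodule.sub_mem _ (self_mem_rspan g)
          (mem_rspan.mpr ⟨e, rfl⟩)))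

end D3Aux
end Symmetry
section Symmetry2
namespace D3Aux
open MulOpposite

variable {T : Type u} [Ring T]

/-- Left annihilator of an element, as a left ideal. -/
def lann (f : T) : Ideal T where
  carrier := {x | x * f = 0}
  add_mem' := by
    intro a b ha hb
    simp only [Set.mem_setOf_eq] at *
    rw [add_mul, ha, hb, add_zero]
  zero_mem' := by simp
  smul_mem' := by
    intro c x hx
    simp only [Set.mem_setOf_eq, smul_eq_mul] at *
    rw [mul_assoc, hx, mul_zero]

lemma mem_lann {f x : T} : x ∈ lann f ↔ x * f = 0 := Iff.rfl

/-- A semisimple ring is right semisimple; hence the opposite ring is semisimple. -/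
theorem op_semisimple (T : Type u) [Ring T] [IsSemisimpleRing T] : IsSemisimpleRing Tᵐᵒᵖ := by
  have key : ∀ J : Submodule Tᵐᵒᵖ T, ∃ f : T, f * f = f ∧ J = rspan T f := by
    intro J
    set Jset : Set T := {f | f * f = f ∧ f ∈ J} with hJset
    have hne : ((fun f => lann f) '' Jset).Nonempty :=
      ⟨lann 0, 0, ⟨by rw [mul_zero], Submodule.zero_mem J⟩, rfl⟩
    obtain ⟨L₀, hL₀mem, hmin⟩ := IsArtinian.set_has_minimal ((fun f => lann f) '' Jset) hne
    obtain ⟨f₀, hf₀, rfl⟩ := hL₀mem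
    have hkey : ∀ g ∈ Jset, lann f₀ ≤ lann g := by
      intro g hg
      obtain ⟨h, hh, hhspan⟩ := rspan_sup_idem hf₀.1 g
      have hhJ : h ∈ J := by
        have hle : rspan T h ≤ J := by
          rw [← hhspan]
          exact sup_le (rspan_le hf₀.2) (rspan_le hg.2)
        exact hle (self_mem_rspan h)
      have hlf : lann h ≤ lann f₀ := by
        intro x hx
        have hf0mem : f₀ ∈ rspan T h := by
          rw [← hhspan]; exact Submodule.mem_sup_left (self_mem_rspan f₀)
        obtain ⟨r, hr⟩ := mem_rspan.mp hf0mem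
        rw [mem_lann] at hx ⊢
        rw [← hr, ← mul_assoc, hx, zero_mul]
      have hlg : lann h ≤ lann g := by
        intro x hx
        have hgmem : g ∈ rspan T h := by
          rw [← hhspan]; exact Submodule.mem_sup_right (self_mem_rspan g)
        obtain ⟨r, hr⟩ := mem_rspan.mp hgmem
        rw [mem_lann] at hx ⊢
        rw [← hr, ← mul_assoc, hx, zero_mul]
      have heq : lann h = lann f₀ := by
        by_contra hneq
        exact hmin (lann h) ⟨h, ⟨hh, hhJ⟩, rfl⟩ (lt_of_le_of_ne hlf hneq)
      rw [← heq]
      exact hlg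
    refine ⟨f₀, hf₀.1, le_antisymm ?_ (rspan_le hf₀.2)⟩
    intro b hb
    obtain ⟨x, hx⟩ := exists_regular b
    have hgidem : (b * x) * (b * x) = b * x := by rw [← mul_assoc, hx]
    have hgJ : b * x ∈ J := by
      have hsm : (op x) • b = b * x := rfl
      rw [← hsm]
      exact Submodule.smul_mem J _ hb
    have h1f : (1 - f₀) * (b * x) = 0 := by
      have hmem10 : (1 - f₀) ∈ lann f₀ := by
        rw [mem_lann, sub_mul, one_mul, hf₀.1, sub_self]
      exact (hkey _ ⟨hgidem, hgJ⟩) hmem10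
    have hfg : f₀ * (b * x) = b * x := by
      rw [sub_mul, one_mul] at h1f
      exact (sub_eq_zero.mp h1f).symm
    have hbfb : b = f₀ * b := by
      calc b = (b * x) * b := hx.symm
        _ = (f₀ * (b * x)) * b := by rw [hfg]
        _ = f₀ * ((b * x) * b) := by rw [mul_assoc]
        _ = f₀ * b := by rw [hx]
    exact mem_rspan.mpr ⟨b, hbfb.symm⟩
  have hcompl : ∀ J : Submodule Tᵐᵒᵖ T, ∃ J', IsCompl J J' := by
    intro J
    obtain ⟨f, hf, rfl⟩ := key J
    refine ⟨rspan T (1 - f), isCompl_of_summand ?_ ?_⟩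
    · rw [eq_bot_iff]
      intro x hx
      obtain ⟨h1, h2⟩ := Submodule.mem_inf.mp hx
      obtain ⟨r, hr⟩ := mem_rspan.mp h1
      obtain ⟨s, hs⟩ := mem_rspan.mp h2
      have e1 : f * x = x := by rw [← hr, ← mul_assoc, hf]
      have e2 : f * x = 0 := by
        rw [← hs, ← mul_assoc, mul_sub, mul_one, hf, sub_self, zero_mul]
      simp only [Submodule.mem_bot]
      rw [← e1, e2]
    · rw [eq_top_iff]
      rintro x -
      have hdec : x = f * x + (1 - f) * x := by rw [sub_mul, one_mul]; abel
      rw [hdec]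
      exact Submodule.add_mem_sup (mem_rspan.mpr ⟨x, rfl⟩) (mem_rspan.mpr ⟨x, rfl⟩)
  haveI hrss : IsSemisimpleModule Tᵐᵒᵖ T := { exists_isCompl := hcompl }
  exact (isSemisimpleModule_iff _ _).mpr (Submodule.orderIsoMapComap (opRight T)).complementedLattice

end D3Aux
end Symmetry2
section Assembly
namespace D3Aux
open MulOpposite

variable (R : Type u) [Ring R]

lemma ss_of_right (h : IsSemisimpleModule Rᵐᵒᵖ R) : IsSemisimpleRing R := by
  haveI : IsSemisimpleRing Rᵐᵒᵖ := by
    haveI := h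
    exact (isSemisimpleModule_iff _ _).mpr (Submodule.orderIsoMapComap (opRight R)).complementedLattice
  haveI : IsSemisimpleRing Rᵐᵒᵖᵐᵒᵖ := op_semisimple Rᵐᵒᵖ
  exact (RingEquiv.opOp R).symm.isSemisimpleRing

lemma right_of_ss [IsSemisimpleRing R] (M : Type u) [AddCommGroup M] [Module Rᵐᵒᵖ M] :
    IsSemisimpleModule Rᵐᵒᵖ M := by
  haveI : IsSemisimpleRing Rᵐᵒᵖ := op_semisimple R
  infer_instance

lemma subsingleton_ss [Subsingleton R] : IsSemisimpleRing R := by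
  have hall : ∀ p : Submodule R R, p = ⊥ := by
    intro p; ext x
    simp [Subsingleton.elim x 0]
  refine (isSemisimpleModule_iff R R).mpr ⟨?_⟩
  intro a
  refine ⟨⊥, ?_⟩
  rw [hall a]
  refine ⟨disjoint_bot_left, codisjoint_iff.mpr ?_⟩
  rw [sup_idem]
  exact (hall ⊤).symm

lemma hasCover_of_ss [IsSemisimpleRing R] (M : Type u) [AddCommGroup M] [Module Rᵐᵒᵖ M] :
    HasCover Rᵐᵒᵖ (fun E => IsD3Module Rᵐᵒᵖ E) M := by
  haveI := right_of_ss R M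
  refine ⟨ModuleCat.of Rᵐᵒᵖ M, LinearMap.id, ?_, ?_, ?_⟩
  · exact isD3Module_of_isSemisimpleModule M
  · intro E' hE' g'
    exact ⟨g', LinearMap.id_comp g'⟩
  · intro h hh
    rw [LinearMap.id_comp] at hh
    rw [hh]
    exact Function.bijective_id

lemma hasEnvelope_of_ss [IsSemisimpleRing R] (M : Type u) [AddCommGroup M] [Module Rᵐᵒᵖ M] :
    HasEnvelope Rᵐᵒᵖ (fun E => IsD3Module Rᵐᵒᵖ E) M := by
  haveI := right_of_ss R M
  refine ⟨ModuleCat.of Rᵐᵒᵖ M, LinearMap.id, ?_, ?_, ?_⟩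
  · exact isD3Module_of_isSemisimpleModule M
  · intro E' hE' g'
    exact ⟨g', LinearMap.comp_id g'⟩
  · intro h hh
    rw [LinearMap.comp_id] at hh
    rw [hh]
    exact Function.bijective_id

lemma hard_of_cover
    (h3 : ∀ (M : Type u) [AddCommGroup M] [Module Rᵐᵒᵖ M], TwoGenerated Rᵐᵒᵖ M →
      HasCover Rᵐᵒᵖ (fun E => IsD3Module Rᵐᵒᵖ E) M) : IsSemisimpleRing R := by
  rcases subsingleton_or_nontrivial R with hsub | hnt
  · exact subsingleton_ss R
  · apply ss_of_right
    apply isSemisimpleModule_right_of_coatom_compl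
    intro m hm
    haveI : IsSimpleModule Rᵐᵒᵖ (R ⧸ m) := isSimpleModule_iff_isCoatom.mpr hm
    have hd3 : IsD3Module Rᵐᵒᵖ (R × (R ⧸ m)) :=
      isD3Module_prod_of_hasCover (isD3Module_self R) (isD3Module_of_isSimpleModule _)
        (h3 _ (twoGenerated_prod_quotient R m))
    exact summand_of_isD3_prod R m hd3

lemma hard_of_envelope
    (h5 : ∀ (M : Type u) [AddCommGroup M] [Module Rᵐᵒᵖ M], TwoGenerated Rᵐᵒᵖ M →
      HasEnvelope Rᵐᵒᵖ (fun E => IsD3Module Rᵐᵒᵖ E) M) : IsSemisimpleRing R := by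
  rcases subsingleton_or_nontrivial R with hsub | hnt
  · exact subsingleton_ss R
  · apply ss_of_right
    apply isSemisimpleModule_right_of_coatom_compl
    intro m hm
    haveI : IsSimpleModule Rᵐᵒᵖ (R ⧸ m) := isSimpleModule_iff_isCoatom.mpr hm
    have hd3 : IsD3Module Rᵐᵒᵖ (R × (R ⧸ m)) :=
      isD3Module_prod_of_hasEnvelope (isD3Module_self R) (isD3Module_of_isSimpleModule _)
        (h5 _ (twoGenerated_prod_quotient R m))
    exact summand_of_isD3_prod R m hd3

end D3Aux
end Assembly

/-- `R` is semisimple artinian iff every (2-generated) right `R`-module has a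
D3-cover, iff every (2-generated) right `R`-module has a D3-envelope. -/
theorem statement_5 (R : Type u) [Ring R] :
    List.TFAE [
      IsSemisimpleRing R,
      ∀ (M : Type u) [AddCommGroup M] [Module Rᵐᵒᵖ M],
        HasCover Rᵐᵒᵖ (fun E => IsD3Module Rᵐᵒᵖ E) M,
      ∀ (M : Type u) [AddCommGroup M] [Module Rᵐᵒᵖ M], TwoGenerated Rᵐᵒᵖ M →
        HasCover Rᵐᵒᵖ (fun E => IsD3Module Rᵐᵒᵖ E) M,
      ∀ (M : Type u) [AddCommGroup M] [Module Rᵐᵒᵖ M],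
        HasEnvelope Rᵐᵒᵖ (fun E => IsD3Module Rᵐᵒᵖ E) M,
      ∀ (M : Type u) [AddCommGroup M] [Module Rᵐᵒᵖ M], TwoGenerated Rᵐᵒᵖ M →
        HasEnvelope Rᵐᵒᵖ (fun E => IsD3Module Rᵐᵒᵖ E) M] := by
  tfae_have 1 → 2 := by
    intro h1 M _ _
    haveI := h1
    exact D3Aux.hasCover_of_ss R M
  tfae_have 2 → 3 := by
    intro h2 M _ _ _
    exact h2 M
  tfae_have 3 → 1 := fun h3 => D3Aux.hard_of_cover R h3
  tfae_have 1 → 4 := by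
    intro h1 M _ _
    haveI := h1
    exact D3Aux.hasEnvelope_of_ss R M
  tfae_have 4 → 5 := by
    intro h4 M _ _ _
    exact h4 M
  tfae_have 5 → 1 := fun h5 => D3Aux.hard_of_envelope R h5
  tfae_finish
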